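/- Let β > 1 and let z ∈ ℂ with |z| < β. Then φ̂_β(z) = 1 if and only if φ_β(z) = 1; that is, the zeros of 1 − φ̂_β and of 1 − φ_β in the disk {|z| < β} coincide. -/

import Mathlib

open scoped BigOperators

/-- The beta-map `x ↦ βx - ⌊βx⌋`. -/
noncomputable def tau (β x : ℝ) : ℝ := β * x - ⌊β * x⌋

/-- Greedy digit `a_n(β,x) = ⌊β·τ_β^{n-1}(x)⌋` (meaningful for `n ≥ 1`). -/
noncomputable def dig (β x : ℝ) (n : ℕ) : ℤ := ⌊β * (tau β)^[n - 1] x⌋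

/-- `x` is a simple point for `β`: some `τ_β^{n-1}(x)` lies in `{1/β, …, ⌊β⌋/β}`. -/
def IsSimplePt (β x : ℝ) : Prop :=
  ∃ n : ℕ, 1 ≤ n ∧ ∃ k : ℕ, 1 ≤ k ∧ (k : ℤ) ≤ ⌊β⌋ ∧ (tau β)^[n - 1] x = (k : ℝ) / β

/-- `L(x)`: the least `n ≥ 1` with `τ_β^{n-1}(x) ∈ {1/β, …, ⌊β⌋/β}`. -/
noncomputable def Lpt (β x : ℝ) : ℕ :=
  sInf {n : ℕ | 1 ≤ n ∧ ∃ k : ℕ, 1 ≤ k ∧ (k : ℤ) ≤ ⌊β⌋ ∧ (tau β)^[n - 1] x = (k : ℝ) / β}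

/-- `β` is simple if `x = 1` is a simple point for `β`. -/
def IsSimpleBeta (β : ℝ) : Prop := IsSimplePt β 1

open Classical in
/-- Quasi-greedy digit `d_n(β,1)` (meaningful for `n ≥ 1`): if `β` is simple with `L = L(1)`,
the periodic sequence repeating the block `(a_1, …, a_{L-1}, a_L - 1)`; otherwise `a_n(β,1)`. -/
noncomputable def qdig (β : ℝ) (n : ℕ) : ℤ :=
  if IsSimpleBeta β then
    (if (n - 1) % Lpt β 1 = Lpt β 1 - 1 then dig β 1 (Lpt β 1) - 1
     else dig β 1 ((n - 1) % Lpt β 1 + 1))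
  else dig β 1 n

/-- `φ_β(z) = Σ_{n≥1} a_n(β,1) β^{-n} z^n`. -/
noncomputable def phi (β : ℝ) (z : ℂ) : ℂ :=
  ∑' n : ℕ, (dig β 1 (n + 1) : ℂ) * (z / (β : ℂ)) ^ (n + 1)

/-- `φ̂_β(z) = Σ_{n≥1} d_n(β,1) β^{-n} z^n`. -/
noncomputable def phiHat (β : ℝ) (z : ℂ) : ℂ :=
  ∑' n : ℕ, (qdig β (n + 1) : ℂ) * (z / (β : ℂ)) ^ (n + 1)

/-- `ψ_β(z) = 1 + Σ_{n≥1} τ_β^n(1) β^{-n} z^n`. -/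
noncomputable def psi (β : ℝ) (z : ℂ) : ℂ :=
  1 + ∑' n : ℕ, (((tau β)^[n + 1] 1 : ℝ) : ℂ) * (z / (β : ℂ)) ^ (n + 1)

/-- `F_λ(x) = Σ_{n≥1} a_n(β,x)/(βλ)^n`. -/
noncomputable def Ffun (β : ℝ) (lam : ℂ) (x : ℝ) : ℂ :=
  ∑' n : ℕ, (dig β x (n + 1) : ℂ) / ((β : ℂ) * lam) ^ (n + 1)

lemma tau_eq_fract (β x : ℝ) : tau β x = Int.fract (β * x) := rfl

lemma tau_iter_nonneg {β : ℝ} (n : ℕ) : 0 ≤ (tau β)^[n] 1 := by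
  cases n with
  | zero => norm_num
  | succ m => rw [Function.iterate_succ_apply', tau_eq_fract]; exact Int.fract_nonneg _

lemma tau_iter_le_one {β : ℝ} (n : ℕ) : (tau β)^[n] 1 ≤ 1 := by
  cases n with
  | zero => norm_num
  | succ m => rw [Function.iterate_succ_apply', tau_eq_fract]; exact (Int.fract_lt_one _).le

lemma dig_nonneg {β : ℝ} (hβ : 0 < β) (m : ℕ) : 0 ≤ dig β 1 m :=
  Int.floor_nonneg.2 (mul_nonneg hβ.le (tau_iter_nonneg _))

lemma dig_le {β : ℝ} (hβ : 0 < β) (m : ℕ) : (dig β 1 m : ℝ) ≤ β := by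
  unfold dig
  calc ((⌊β * (tau β)^[m-1] 1⌋ : ℤ) : ℝ) ≤ β * (tau β)^[m-1] 1 := Int.floor_le _
  _ ≤ β * 1 := by nlinarith [tau_iter_le_one (β := β) (m-1)]
  _ = β := mul_one β

lemma tau_zero (β : ℝ) : tau β 0 = 0 := by simp [tau]

lemma tau_iter_zero {β : ℝ} (hβ : 0 < β) {L : ℕ} {k : ℕ} (hL : 1 ≤ L)
    (hk : (tau β)^[L-1] 1 = (k:ℝ)/β) : ∀ j, L ≤ j → (tau β)^[j] 1 = 0 := by
  have hLz : (tau β)^[L] 1 = 0 := by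
    have hL' : L = (L-1) + 1 := (Nat.succ_pred_eq_of_pos hL).symm
    rw [hL', Function.iterate_succ_apply', hk]
    have h : β * ((k:ℝ)/β) = (k:ℝ) := by field_simp
    unfold tau
    rw [h]
    simp
  intro j hj
  induction j, hj using Nat.le_induction with
  | base => exact hLz
  | succ n hn ih => rw [Function.iterate_succ_apply', ih, tau_zero]

lemma qdig_abs_le {β : ℝ} (hβ : 1 < β) (m : ℕ) : |(qdig β m : ℝ)| ≤ β := by
  have h0 : (0:ℝ) < β := by linarith
  unfold qdig
  split_ifs with h1 h2
  · have ha : (0:ℝ) ≤ (dig β 1 (Lpt β 1) : ℝ) := by exact_mod_cast dig_nonneg h0 (Lpt β 1)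
    have hb := dig_le h0 (Lpt β 1)
    rw [abs_le]
    push_cast
    constructor <;> linarith
  · have ha : (0:ℝ) ≤ (dig β 1 ((m-1) % Lpt β 1 + 1) : ℝ) := by
      exact_mod_cast dig_nonneg h0 ((m-1) % Lpt β 1 + 1)
    have hb := dig_le h0 ((m-1) % Lpt β 1 + 1)
    rw [abs_le]
    constructor <;> linarith
  · have ha : (0:ℝ) ≤ (dig β 1 m : ℝ) := by exact_mod_cast dig_nonneg h0 m
    have hb := dig_le h0 m
    rw [abs_le]
    constructor <;> linarith

theorem stmt9 (β : ℝ) (hβ : 1 < β) (z : ℂ) (hz : ‖z‖ < β) :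
    phiHat β z = 1 ↔ phi β z = 1 := by
  by_cases hs : IsSimpleBeta β
  case neg =>
    have h : phiHat β z = phi β z := tsum_congr (fun n => by simp [qdig, hs])
    rw [h]
  case pos =>
  have h0 : (0:ℝ) < β := by linarith
  have hmem : Lpt β 1 ∈ {n : ℕ | 1 ≤ n ∧ ∃ k : ℕ, 1 ≤ k ∧ (k : ℤ) ≤ ⌊β⌋ ∧
      (tau β)^[n - 1] 1 = (k : ℝ) / β} := Nat.sInf_mem hs
  obtain ⟨hL1, k, hk1, hkβ, hk⟩ := hmem
  set L := Lpt β 1 with hLdef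
  set w : ℂ := z / (β : ℂ) with hwdef
  have hw : ‖w‖ < 1 := by
    rw [hwdef, norm_div, Complex.norm_of_nonneg h0.le, div_lt_one h0]
    exact hz
  -- summability of phiHat series
  have hsum : Summable (fun n : ℕ => (qdig β (n+1) : ℂ) * w ^ (n+1)) := by
    apply Summable.of_norm_bounded (g := fun n => (β * ‖w‖) * ‖w‖ ^ n)
    · exact (summable_geometric_of_lt_one (norm_nonneg w) hw).mul_left _
    · intro n
      have : ‖(qdig β (n+1) : ℂ) * w ^ (n+1)‖ = |(qdig β (n+1) : ℝ)| * ‖w‖ ^ (n+1) := by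
        rw [norm_mul, norm_pow]
        norm_num [Complex.norm_intCast]
      rw [this, pow_succ]
      have h1 := qdig_abs_le hβ (n+1)
      have h2 : (0:ℝ) ≤ ‖w‖ ^ n := pow_nonneg (norm_nonneg w) n
      have h3 : (0:ℝ) ≤ ‖w‖ := norm_nonneg w
      calc |(qdig β (n+1) : ℝ)| * (‖w‖ ^ n * ‖w‖)
          ≤ β * (‖w‖ ^ n * ‖w‖) := by
            apply mul_le_mul_of_nonneg_right h1 (by positivity)
        _ = β * ‖w‖ * ‖w‖ ^ n := by ring
  -- phi as a finite sum
  have hdig0 : ∀ n : ℕ, L ≤ n → dig β 1 (n+1) = 0 := by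
    intro n hn
    unfold dig
    rw [Nat.add_sub_cancel, tau_iter_zero h0 hL1 hk n hn]
    simp
  have hphi : phi β z = ∑ n ∈ Finset.range L, (dig β 1 (n + 1) : ℂ) * w ^ (n + 1) := by
    refine tsum_eq_sum (fun n hn => ?_)
    rw [hdig0 n (le_of_not_gt (fun h => hn (Finset.mem_range.mpr h)))]
    simp
  -- functional equation
  have hper : ∀ n : ℕ, qdig β (n + L + 1) = qdig β (n + 1) := by
    intro n
    unfold qdig
    simp only [hs, if_true, Nat.add_sub_cancel]
    rw [Nat.add_mod_right]
  have hshift : (fun n : ℕ => (qdig β (n + L + 1) : ℂ) * w ^ (n + L + 1))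
      = fun n => w ^ L * ((qdig β (n+1) : ℂ) * w ^ (n+1)) := by
    funext n
    rw [hper n]
    ring
  have hfun : phiHat β z = (∑ n ∈ Finset.range L, (qdig β (n+1) : ℂ) * w ^ (n+1))
      + w ^ L * phiHat β z := by
    conv_lhs => rw [phiHat, ← Summable.sum_add_tsum_nat_add L hsum]
    congr 1
    have : ∀ n : ℕ, (qdig β (n + L + 1) : ℂ) * w ^ (n + L + 1)
        = w ^ L * ((qdig β (n+1) : ℂ) * w ^ (n+1)) := fun n => by rw [hper n]; ring
    calc ∑' n : ℕ, (qdig β (n + L + 1) : ℂ) * w ^ (n + L + 1)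
        = ∑' n : ℕ, w ^ L * ((qdig β (n+1) : ℂ) * w ^ (n+1)) := tsum_congr this
      _ = w ^ L * phiHat β z := tsum_mul_left
  -- compute the block sum
  have hblock : (∑ n ∈ Finset.range L, (qdig β (n+1) : ℂ) * w ^ (n+1))
      = phi β z - w ^ L := by
    rw [hphi]
    have : ∀ n ∈ Finset.range L, (qdig β (n+1) : ℂ) * w ^ (n+1)
        = (dig β 1 (n+1) : ℂ) * w ^ (n+1) - (if n = L - 1 then w ^ L else 0) := by
      intro n hn
      have hnL : n < L := Finset.mem_range.mp hn
      have hmod : n % L = n := Nat.mod_eq_of_lt hnL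
      unfold qdig
      simp only [hs, if_true, Nat.add_sub_cancel, ← hLdef, hmod]
      by_cases hcase : n = L - 1
      · rw [if_pos hcase, if_pos hcase]
        have hn1 : n + 1 = L := by omega
        rw [hn1]
        push_cast
        ring
      · rw [if_neg hcase, if_neg hcase]
        ring
    rw [Finset.sum_congr rfl this, Finset.sum_sub_distrib, Finset.sum_ite_eq' (Finset.range L) (L-1)]
    rw [if_pos (Finset.mem_range.mpr (by omega))]
  -- conclude
  have heq : phiHat β z = (phi β z - w ^ L) + w ^ L * phiHat β z := by
    rw [hblock] at hfun; exact hfun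
  have hwL : w ^ L ≠ 1 := by
    intro h
    have : ‖w ^ L‖ < 1 := by
      rw [norm_pow]
      exact pow_lt_one₀ (norm_nonneg w) hw (by omega)
    rw [h] at this
    simp at this
  constructor
  · intro h
    rw [h] at heq
    have : phi β z - w ^ L = 1 - w ^ L := by linear_combination -heq
    linear_combination this
  · intro h
    rw [h] at heq
    have h2 : phiHat β z * (1 - w ^ L) = 1 * (1 - w ^ L) := by linear_combination heq
    have h3 : (1 : ℂ) - w ^ L ≠ 0 := sub_ne_zero.mpr (Ne.symm hwL)
    exact mul_right_cancel₀ h3 h2
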